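/- Under the core RCT assumptions (exchangeability, positivity, consistency) together with exposure necessity alone — without assuming no effect on exposure or no cross-infectivity — and provided all conditioning events below have positive probability and all denominators are nonzero, the contrast conditional on exposure is identified: [P(Y^1 = 1 | E^1 ≠ 0)/P(Y^0 = 1 | E^0 ≠ 0)] / [P(Y^1 = 2 | E^1 ≠ 0)/P(Y^0 = 2 | E^0 ≠ 0)] = [P(Y = 1 | A = 1)/P(Y = 1 | A = 0)] / [P(Y = 2 | A = 1)/P(Y = 2 | A = 0)]. -/

import Mathlib

open MeasureTheory

/-- `prR P B` is the probability `P(B)` as a real number. -/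
noncomputable def prR {Ω : Type*} [MeasurableSpace Ω] (P : Measure Ω) (B : Set Ω) : ℝ :=
  (P B).toReal

/-- `cprR P B C` is the conditional probability `P(B | C) = P(B ∩ C) / P(C)`. -/
noncomputable def cprR {Ω : Type*} [MeasurableSpace Ω] (P : Measure Ω) (B C : Set Ω) : ℝ :=
  (P (B ∩ C)).toReal / (P C).toReal

/-- identification of the contrast conditional on exposure (CCE) under
exchangeability, positivity, consistency and exposure necessity alone (without
no effect on exposure or no cross-infectivity). -/
theorem stmt3
    {Ω : Type*} [MeasurableSpace Ω] (P : Measure Ω) [IsProbabilityMeasure P]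
    (A : Ω → Fin 2) (E Y : Ω → Fin 3)
    (Ea Ya : Fin 2 → Ω → Fin 3)
    (hA : Measurable A) (hE : Measurable E) (hY : Measurable Y)
    (hEa : ∀ a, Measurable (Ea a)) (hYa : ∀ a, Measurable (Ya a))
    -- exchangeability: (Y^a, E^a) ⫫ A
    (exch : ∀ (a : Fin 2) (y e : Fin 3) (t : Fin 2),
      P ({ω | Ya a ω = y} ∩ {ω | Ea a ω = e} ∩ {ω | A ω = t})
        = P ({ω | Ya a ω = y} ∩ {ω | Ea a ω = e}) * P {ω | A ω = t})
    -- positivity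
    (pos : ∀ a : Fin 2, 0 < prR P {ω | A ω = a})
    -- consistency
    (cons : ∀ a : Fin 2, ∀ᵐ ω ∂P, A ω = a → Ea a ω = E ω ∧ Ya a ω = Y ω)
    -- exposure necessity
    (expnec : ∀ a : Fin 2, ∀ᵐ ω ∂P, Ea a ω = 0 → Ya a ω = 0)
    -- all conditioning events have positive probability
    (posEne : ∀ a : Fin 2, 0 < prR P {ω | Ea a ω ≠ 0})
    -- all denominators are nonzero
    (d1 : cprR P {ω | Ya 0 ω = 1} {ω | Ea 0 ω ≠ 0} ≠ 0)
    (d2 : cprR P {ω | Ya 0 ω = 2} {ω | Ea 0 ω ≠ 0} ≠ 0)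
    (d3 : cprR P {ω | Ya 1 ω = 2} {ω | Ea 1 ω ≠ 0} ≠ 0)
    (d4 : cprR P {ω | Y ω = 1} {ω | A ω = 0} ≠ 0)
    (d5 : cprR P {ω | Y ω = 2} {ω | A ω = 0} ≠ 0)
    (d6 : cprR P {ω | Y ω = 2} {ω | A ω = 1} ≠ 0) :
    (cprR P {ω | Ya 1 ω = 1} {ω | Ea 1 ω ≠ 0} / cprR P {ω | Ya 0 ω = 1} {ω | Ea 0 ω ≠ 0})
        / (cprR P {ω | Ya 1 ω = 2} {ω | Ea 1 ω ≠ 0} / cprR P {ω | Ya 0 ω = 2} {ω | Ea 0 ω ≠ 0})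
      = (cprR P {ω | Y ω = 1} {ω | A ω = 1} / cprR P {ω | Y ω = 1} {ω | A ω = 0})
        / (cprR P {ω | Y ω = 2} {ω | A ω = 1} / cprR P {ω | Y ω = 2} {ω | A ω = 0}) := by
  -- abbreviations
  set p : Fin 2 → Fin 3 → ℝ := fun a y => prR P {ω | Ya a ω = y} with hp
  -- Step 1: LHS conditionals equal p a y / q a
  have hinter : ∀ (a : Fin 2) (y : Fin 3), y ≠ 0 →
      P ({ω | Ya a ω = y} ∩ {ω | Ea a ω ≠ 0}) = P {ω | Ya a ω = y} := by
    intro a y hy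
    have hnull : P ({ω | Ya a ω = y} ∩ {ω | Ea a ω = 0}) = 0 := by
      have h0 : P {ω | ¬ (Ea a ω = 0 → Ya a ω = 0)} = 0 := by
        have := expnec a
        rwa [ae_iff] at this
      refine measure_mono_null ?_ h0
      intro ω ⟨h1, h2⟩
      simp only [Set.mem_setOf_eq] at *
      intro h
      exact hy (h1 ▸ (h h2) ▸ rfl)
    refine le_antisymm (measure_mono Set.inter_subset_left) ?_
    calc P {ω | Ya a ω = y}
        ≤ P ({ω | Ya a ω = y} ∩ {ω | Ea a ω ≠ 0}) +
            P ({ω | Ya a ω = y} ∩ {ω | Ea a ω = 0}) := by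
          refine (measure_mono ?_).trans (measure_union_le _ _)
          intro ω h
          by_cases h0 : Ea a ω = 0
          · exact Or.inr ⟨h, h0⟩
          · exact Or.inl ⟨h, h0⟩
      _ = P ({ω | Ya a ω = y} ∩ {ω | Ea a ω ≠ 0}) := by rw [hnull, add_zero]
  have hLHS : ∀ (a : Fin 2) (y : Fin 3), y ≠ 0 →
      cprR P {ω | Ya a ω = y} {ω | Ea a ω ≠ 0} = p a y / prR P {ω | Ea a ω ≠ 0} := by
    intro a y hy
    rw [cprR, hinter a y hy]; rfl
  -- Step 2: RHS conditionals equal p a y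
  have hsplit : ∀ (a : Fin 2) (y : Fin 3) (T : Set Ω), MeasurableSet T →
      P ({ω | Ya a ω = y} ∩ T) = ∑ e : Fin 3, P ({ω | Ya a ω = y} ∩ {ω | Ea a ω = e} ∩ T) := by
    intro a y T hT
    have hU : {ω | Ya a ω = y} ∩ T = ⋃ e : Fin 3, ({ω | Ya a ω = y} ∩ {ω | Ea a ω = e} ∩ T) := by
      ext ω
      simp only [Set.mem_inter_iff, Set.mem_iUnion, Set.mem_setOf_eq]
      constructor
      · rintro ⟨h1, h2⟩; exact ⟨Ea a ω, ⟨h1, rfl⟩, h2⟩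
      · rintro ⟨e, ⟨h1, _⟩, h2⟩; exact ⟨h1, h2⟩
    rw [hU, measure_iUnion ?_ ?_, tsum_fintype]
    · intro i j hij
      simp only [Function.onFun, Set.disjoint_left]
      rintro ω ⟨⟨_, h1⟩, _⟩ ⟨⟨_, h2⟩, _⟩
      exact hij (h1 ▸ h2 ▸ rfl)
    · intro e
      exact (((hYa a (measurableSet_singleton y)).inter
        (hEa a (measurableSet_singleton e))).inter hT)
  have hindep : ∀ (a : Fin 2) (y : Fin 3) (t : Fin 2),
      P ({ω | Ya a ω = y} ∩ {ω | A ω = t}) = P {ω | Ya a ω = y} * P {ω | A ω = t} := by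
    intro a y t
    have hT : MeasurableSet {ω | A ω = t} := hA (measurableSet_singleton t)
    rw [hsplit a y _ hT]
    have : P {ω | Ya a ω = y} = P ({ω | Ya a ω = y} ∩ Set.univ) := by rw [Set.inter_univ]
    rw [this, hsplit a y Set.univ MeasurableSet.univ, Finset.sum_mul]
    congr 1; ext e
    rw [Set.inter_univ, exch a y e t]
  have hRHS : ∀ (a : Fin 2) (y : Fin 3), cprR P {ω | Y ω = y} {ω | A ω = a} = p a y := by
    intro a y
    have hcons : P ({ω | Y ω = y} ∩ {ω | A ω = a}) = P ({ω | Ya a ω = y} ∩ {ω | A ω = a}) := by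
      apply measure_congr
      filter_upwards [cons a] with ω h
      simp only [Set.mem_inter_iff, Set.mem_setOf_eq, eq_iff_iff]
      constructor
      · rintro ⟨h1, h2⟩; exact ⟨(h h2).2.trans h1, h2⟩
      · rintro ⟨h1, h2⟩; exact ⟨((h h2).2).symm.trans h1, h2⟩
    rw [cprR, hcons, hindep a y a]
    have hAfin : P {ω | A ω = a} ≠ ⊤ := measure_ne_top _ _
    have hYfin : P {ω | Ya a ω = y} ≠ ⊤ := measure_ne_top _ _
    rw [ENNReal.toReal_mul]
    have hApos : (P {ω | A ω = a}).toReal ≠ 0 := ne_of_gt (pos a)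
    field_simp [hp, prR]
    rfl
  -- finish: rewrite everything and do field arithmetic
  have q0 : prR P {ω | Ea 0 ω ≠ 0} ≠ 0 := ne_of_gt (posEne 0)
  have q1 : prR P {ω | Ea 1 ω ≠ 0} ≠ 0 := ne_of_gt (posEne 1)
  have one_ne : (1 : Fin 3) ≠ 0 := by decide
  have two_ne : (2 : Fin 3) ≠ 0 := by decide
  rw [hLHS 0 1 one_ne] at d1
  rw [hLHS 0 2 two_ne] at d2
  rw [hLHS 1 2 two_ne] at d3
  have p01 : p 0 1 ≠ 0 := fun h => d1 (by rw [h]; simp)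
  have p02 : p 0 2 ≠ 0 := fun h => d2 (by rw [h]; simp)
  have p12 : p 1 2 ≠ 0 := fun h => d3 (by rw [h]; simp)
  rw [hLHS 0 1 one_ne, hLHS 0 2 two_ne, hLHS 1 2 two_ne, hLHS 1 1 one_ne,
    hRHS 0 1, hRHS 0 2, hRHS 1 1, hRHS 1 2]
  field_simp
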